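/- If the map p ↦ ∑_{i=1}^n p_i W_i takes a positive definite value at some point of the standard simplex, then the function p ↦ -log det(∑ p_i W_i) attains a minimum on the set {p ∈ Δ : ∑ p_i W_i ≻ 0}. -/

import Mathlib

open Matrix

lemma posSemidef_smul_aux {m : ℕ} {M : Matrix (Fin m) (Fin m) ℝ} (hM : M.PosSemidef)
    {c : ℝ} (hc : 0 ≤ c) : (c • M).PosSemidef := by
  constructor
  · unfold Matrix.IsHermitian
    rw [conjTranspose_smul, hM.1]
    simp
  · exact (hM.smul hc).2

lemma posDef_of_posSemidef_det_ne_zero {m : ℕ} {M : Matrix (Fin m) (Fin m) ℝ}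
    (hM : M.PosSemidef) (hd : M.det ≠ 0) : M.PosDef := by
  refine Matrix.PosDef.of_dotProduct_mulVec_pos hM.1 fun x hx => ?_
  rcases lt_or_eq_of_le (hM.dotProduct_mulVec_nonneg x) with h | h
  · exact h
  · exfalso
    apply hx
    have h0 : M *ᵥ x = 0 := (hM.dotProduct_mulVec_zero_iff x).1 h.symm
    exact Matrix.eq_zero_of_mulVec_eq_zero hd h0

/-- If `p ↦ ∑ i, p i • W i` is positive definite at some point of the standard simplex, then
`p ↦ -log det (∑ i, p i • W i)` attains a minimum on `{p ∈ Δ | ∑ i, p i • W i ≻ 0}`. -/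
theorem exists_min_neg_log_det (n : ℕ) (W : Fin n → Matrix (Fin n) (Fin n) ℝ)
    (hW : ∀ i, (W i).PosSemidef)
    (hfeas : ∃ p ∈ stdSimplex ℝ (Fin n), (∑ i, p i • W i).PosDef) :
    ∃ p ∈ {p : Fin n → ℝ | p ∈ stdSimplex ℝ (Fin n) ∧ (∑ i, p i • W i).PosDef},
      ∀ q ∈ {p : Fin n → ℝ | p ∈ stdSimplex ℝ (Fin n) ∧ (∑ i, p i • W i).PosDef},
        -Real.log (∑ i, p i • W i).det ≤ -Real.log (∑ i, q i • W i).det := by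
  obtain ⟨p₀, hp₀, hPD₀⟩ := hfeas
  -- the determinant function is continuous on the compact simplex
  have hcont : Continuous fun p : Fin n → ℝ => (∑ i, p i • W i).det := by
    apply Continuous.matrix_det
    exact continuous_finset_sum _ fun i _ => (continuous_apply i).smul continuous_const
  have hK : IsCompact (stdSimplex ℝ (Fin n)) := isCompact_stdSimplex _ _
  obtain ⟨p, hp, hmax⟩ := hK.exists_isMaxOn ⟨p₀, hp₀⟩ hcont.continuousOn
  have hge : (∑ i, p₀ i • W i).det ≤ (∑ i, p i • W i).det := hmax hp₀
  have hdetp : 0 < (∑ i, p i • W i).det := lt_of_lt_of_le hPD₀.det_pos hge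
  have hpsd : ∀ q ∈ stdSimplex ℝ (Fin n), (∑ i, q i • W i).PosSemidef := by
    intro q hq
    have : ∀ i ∈ Finset.univ, (q i • W i).PosSemidef := fun i _ =>
      posSemidef_smul_aux (hW i) (hq.1 i)
    exact Finset.sum_induction _ _ (fun a b ha hb => ha.add hb) Matrix.PosSemidef.zero this
  have hPDp : (∑ i, p i • W i).PosDef :=
    posDef_of_posSemidef_det_ne_zero (hpsd p hp) (ne_of_gt hdetp)
  refine ⟨p, ⟨hp, hPDp⟩, ?_⟩
  rintro q ⟨hq, hqPD⟩
  have h1 : (∑ i, q i • W i).det ≤ (∑ i, p i • W i).det := hmax hq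
  have h2 : Real.log (∑ i, q i • W i).det ≤ Real.log (∑ i, p i • W i).det :=
    Real.log_le_log hqPD.det_pos h1
  linarith
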